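/- (Bobylev-type change of variables on the sphere.) Let q∈ℝ³, q≠0, set q̂=q/|q|, and let φ:ℝ³→ℝ be continuous. Then ∫_{S²} (q̂·n)₊ φ( ((q·n) n ) dn = (1/4) ∫_{S²} φ( (q−|q|σ)/2 ) dσ, where x₊=max(x,0) denotes the positive part. -/

import Mathlib

open MeasureTheory Real Metric Filter Set
open scoped RealInnerProductSpace Topology ENNReal
noncomputable section

/-- The velocity space ℝ³. -/
abbrev V : Type := EuclideanSpace ℝ (Fin 3)

/-- Surface measure on the unit sphere S² ⊂ ℝ³ (total mass 4π). -/
def S2 : Measure (sphere (0:V) 1) := (volume : Measure V).toSphere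

/-- The weight ⟨v⟩ = √(1+|v|²). -/
def jap (v : V) : ℝ := Real.sqrt (1 + ‖v‖^2)

/-- The weighted L¹ norm ‖f‖_{L¹_η} = ∫ |f(v)| ⟨v⟩^η dv. -/
def L1norm (f : V → ℝ) (η : ℝ) : ℝ := ∫ v : V, |f v| * (jap v)^η

/-- The weighted Lᵖ norm ‖f‖_{L^p_η} = (∫ |f(v)|^p ⟨v⟩^{pη} dv)^{1/p}. -/
def Lpnorm (f : V → ℝ) (p η : ℝ) : ℝ := (∫ v : V, |f v|^p * (jap v)^(p*η)) ^ (1/p)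

/-- Membership f ∈ L¹_η(ℝ³). -/
def MemL1w (f : V → ℝ) (η : ℝ) : Prop :=
  Integrable (fun v : V => |f v| * (jap v)^η)

/-- Membership f ∈ L^p_η(ℝ³). -/
def MemLpw (f : V → ℝ) (p η : ℝ) : Prop :=
  Integrable (fun v : V => |f v|^p * (jap v)^(p*η))

/-- A_ζ[ψ](v,w) = (1/4π) ∫_{S²} (ψ(v')+ψ(w')−ψ(v)−ψ(w)) dσ, with
v' = v + (ζ/2)(|q|σ−q), w' = w − (ζ/2)(|q|σ−q), q = v−w. -/
def Aop (ζ : ℝ) (ψ : V → ℝ) (v w : V) : ℝ :=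
  (4*π)⁻¹ * ∫ (σ : sphere (0:V) 1),
    (ψ (v + (ζ/2) • (‖v - w‖ • (σ:V) - (v - w)))
      + ψ (w - (ζ/2) • (‖v - w‖ • (σ:V) - (v - w))) - ψ v - ψ w) ∂S2

/-- J_e[ψ](v,w) = (1/4π) ∫_{S²} (ψ(ṽ*)−ψ(v)) dσ where ṽ* = v − κ(q−|q|σ), q = v−w. -/
def Jop (κ : ℝ) (ψ : V → ℝ) (v w : V) : ℝ :=
  (4*π)⁻¹ * ∫ (σ : sphere (0:V) 1),
    (ψ (v - κ • ((v - w) - ‖v - w‖ • (σ:V))) - ψ v) ∂S2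

/-- The gain part 𝒬⁺(f,f) of the inelastic Boltzmann operator with restitution
coefficient ε; with ζ = (1+ε)/2 and q = v−w,
'v = v + (ζ/2ε)(|q|σ−q) and 'w = w − (ζ/2ε)(|q|σ−q). -/
def Qplus (ε : ℝ) (f : V → ℝ) (v : V) : ℝ :=
  (4*π*ε^2)⁻¹ * ∫ w : V, (∫ (σ : sphere (0:V) 1),
      ‖v - w‖ * f (v + ((1+ε)/(4*ε)) • (‖v - w‖ • (σ:V) - (v - w)))
        * f (w - ((1+ε)/(4*ε)) • (‖v - w‖ • (σ:V) - (v - w))) ∂S2)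

/-- The loss part 𝒬⁻(f,f)(v) = f(v) ∫ |v−w| f(w) dw. -/
def Qminus (f : V → ℝ) (v : V) : ℝ := f v * ∫ w : V, ‖v - w‖ * f w

/-- The gain part ℒ⁺ of the linear scattering operator with host distribution F1,
mean free path lam, mass ratio α = m₁/(1+m₁) and inelasticity β = (1−e)/2;
with q = v−w, γ = α(1−β)/(1−2β) = α(1+e)/(2e), γ̄ = (1−α)(1−β)/(1−2β) = (1−α)(1+e)/(2e),
ṽ⋆ = v − γ(q−|q|σ), w̃⋆ = w + γ̄(q−|q|σ). -/
def Lplus (m₁ lam e : ℝ) (F1 f : V → ℝ) (v : V) : ℝ :=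
  (4*π*lam*e^2)⁻¹ * ∫ w : V, (∫ (σ : sphere (0:V) 1),
      ‖v - w‖ * f (v - ((m₁/(1+m₁)) * (1+e)/(2*e)) • ((v - w) - ‖v - w‖ • (σ:V)))
        * F1 (w + ((1/(1+m₁)) * (1+e)/(2*e)) • ((v - w) - ‖v - w‖ • (σ:V))) ∂S2)

/-- The collision frequency ν(v) = (1/λ) ∫ |v−w| F₁(w) dw. -/
def nufreq (lam : ℝ) (F1 : V → ℝ) (v : V) : ℝ := lam⁻¹ * ∫ w : V, ‖v - w‖ * F1 w

lemma hasFDerivAt_norm' {x : V} (hx : x ≠ 0) :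
    HasFDerivAt (fun y : V => ‖y‖) (innerSL ℝ (‖x‖⁻¹ • x)) x := by
  have h2 : HasFDerivAt (fun y : V => ‖y‖ ^ 2) (2 • (innerSL ℝ x)) x :=
    (hasStrictFDerivAt_norm_sq x).hasFDerivAt
  have hne : ‖x‖ ^ 2 ≠ 0 := pow_ne_zero _ (norm_ne_zero_iff.2 hx)
  have h3 := h2.sqrt hne
  have he : (fun y : V => Real.sqrt (‖y‖ ^ 2)) = fun y : V => ‖y‖ := by
    funext y; rw [Real.sqrt_sq (norm_nonneg y)]
  rw [he] at h3
  refine h3.congr_fderiv ?_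
  ext h
  have : Real.sqrt (‖x‖ ^ 2) = ‖x‖ := Real.sqrt_sq (norm_nonneg x)
  simp [this, real_inner_smul_left, two_smul]
  field_simp
  ring

def Tmap (e : V) (x : V) : V := ‖x‖ • e - (2 * ⟪e, x⟫ * ‖x‖⁻¹) • x

def Tder (e x : V) : V →L[ℝ] V :=
  (innerSL ℝ (‖x‖⁻¹ • x)).smulRight e -
  ((2 * ⟪e, x⟫ * ‖x‖⁻¹) • ContinuousLinearMap.id ℝ V +
   ((2 * ⟪e, x⟫) • ((-(‖x‖ ^ 2)⁻¹) • innerSL ℝ (‖x‖⁻¹ • x))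
      + ‖x‖⁻¹ • ((2:ℝ) • innerSL ℝ e)).smulRight x)

lemma hasFDerivAt_Tmap (e : V) {x : V} (hx : x ≠ 0) :
    HasFDerivAt (Tmap e) (Tder e x) x := by
  have hn := hasFDerivAt_norm' hx
  have h1 : HasFDerivAt (fun y : V => ‖y‖ • e)
      ((innerSL ℝ (‖x‖⁻¹ • x)).smulRight e) x := hn.smul_const e
  have hi : HasFDerivAt (fun y : V => ⟪e, y⟫) (innerSL ℝ e) x :=
    (innerSL ℝ e).hasFDerivAt
  have hc1 : HasFDerivAt (fun y : V => 2 * ⟪e, y⟫) ((2:ℝ) • innerSL ℝ e) x :=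
    hi.const_mul 2
  have hinv : HasFDerivAt (fun y : V => ‖y‖⁻¹)
      ((-(‖x‖ ^ 2)⁻¹) • innerSL ℝ (‖x‖⁻¹ • x)) x :=
    (hasDerivAt_inv (norm_ne_zero_iff.2 hx)).comp_hasFDerivAt x hn
  have ha := hc1.mul hinv
  have h2 := ha.smul (hasFDerivAt_id x)
  exact h1.sub h2

lemma det_Tder {e x : V} (he : ‖e‖ = 1) (h1 : 0 < ⟪e, x⟫) (h2 : ⟪e, x⟫ < ‖x‖) :
    (Tder e x).det = -(4 * ⟪e, x⟫ * ‖x‖⁻¹) := by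
  have hx : x ≠ 0 := by
    rintro rfl; simp at h1
  have hr : (0:ℝ) < ‖x‖ := norm_pos_iff.2 hx
  have hrne : (‖x‖:ℝ) ≠ 0 := ne_of_gt hr
  -- find v orthogonal to x and e
  obtain ⟨v, hv0, hxv, hev⟩ : ∃ v : V, v ≠ 0 ∧ ⟪x, v⟫ = 0 ∧ ⟪e, v⟫ = 0 := by
    set L : V →ₗ[ℝ] ℝ × ℝ :=
      ((innerSL ℝ x : V →L[ℝ] ℝ) : V →ₗ[ℝ] ℝ).prod ((innerSL ℝ e : V →L[ℝ] ℝ) : V →ₗ[ℝ] ℝ)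
    have hker : LinearMap.ker L ≠ ⊥ := by
      intro hbot
      have h3 : Module.finrank ℝ V = 3 := finrank_euclideanSpace_fin
      have hrn := LinearMap.finrank_range_add_finrank_ker L
      rw [hbot, finrank_bot, add_zero, h3] at hrn
      have hle : Module.finrank ℝ (LinearMap.range L) ≤ Module.finrank ℝ (ℝ × ℝ) :=
        Submodule.finrank_le _
      rw [hrn] at hle
      simp [Module.finrank_prod] at hle
    obtain ⟨v, hv, hv0⟩ := Submodule.exists_mem_ne_zero_of_ne_bot hker
    rw [LinearMap.mem_ker] at hv
    refine ⟨v, hv0, ?_, ?_⟩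
    · have := congrArg Prod.fst hv; simpa [L] using this
    · have := congrArg Prod.snd hv; simpa [L] using this
  have hee : ⟪e, e⟫ = 1 := by
    rw [real_inner_self_eq_norm_sq, he]; norm_num
  have hxx : ⟪x, x⟫ = ‖x‖ ^ 2 := real_inner_self_eq_norm_sq x
  -- basis (x, e, v)
  have li : LinearIndependent ℝ ![x, e, v] := by
    rw [Fintype.linearIndependent_iff]
    intro g hg
    rw [Fin.sum_univ_three] at hg
    simp only [Matrix.cons_val_zero, Matrix.cons_val_one, Matrix.head_cons,
      Matrix.cons_val_two, Matrix.tail_cons] at hg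
    have e0 := congrArg (fun y => ⟪y, v⟫) hg
    simp only [inner_add_left, real_inner_smul_left, inner_zero_left, hxv, hev,
      real_inner_self_eq_norm_sq, mul_zero, add_zero, zero_add, mul_one] at e0
    have hg2 : g 2 = 0 := by
      have hv2 : (0:ℝ) < ‖v‖ ^ 2 := pow_pos (norm_pos_iff.2 hv0) 2
      nlinarith
    have e1 := congrArg (fun y => ⟪y, x⟫) hg
    have e2 := congrArg (fun y => ⟪y, e⟫) hg
    simp only [inner_add_left, real_inner_smul_left, inner_zero_left, hxx, hee,
      real_inner_comm v x, real_inner_comm v e, real_inner_comm x e, hxv, hev, hg2,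
      mul_zero, add_zero, zero_add, mul_one, zero_mul] at e1 e2
    have hs2 : ⟪x, e⟫ ^ 2 < ‖x‖ ^ 2 := by
      rw [← real_inner_comm x e]; nlinarith
    have h5 : g 0 * (‖x‖ ^ 2 - ⟪x, e⟫ ^ 2) = 0 := by linear_combination e1 - ⟪x, e⟫ * e2
    have hg0 : g 0 = 0 := by
      rcases mul_eq_zero.1 h5 with h | h
      · exact h
      · nlinarith
    have hg1 : g 1 = 0 := by rw [hg0] at e2; linarith
    intro i; fin_cases i <;> assumption
  have hcard : Fintype.card (Fin 3) = Module.finrank ℝ V := by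
    simp [finrank_euclideanSpace_fin]
  let B : Module.Basis (Fin 3) ℝ V := basisOfLinearIndependentOfCardEqFinrank li hcard
  have hB : ⇑B = ![x, e, v] := coe_basisOfLinearIndependentOfCardEqFinrank li hcard
  let M : Matrix (Fin 3) (Fin 3) ℝ :=
    !![-2*⟪e, x⟫/‖x‖, 2*⟪e, x⟫^2/‖x‖^3 - 2/‖x‖, 0;
       ‖x‖, -(⟪e, x⟫/‖x‖), 0;
       0, 0, -2*⟪e, x⟫/‖x‖]
  have hTx : (Tder e x) x = (-2*⟪e, x⟫/‖x‖) • x + ‖x‖ • e := by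
    simp only [Tder, ContinuousLinearMap.sub_apply, ContinuousLinearMap.add_apply,
      ContinuousLinearMap.smulRight_apply, innerSL_apply_apply, ContinuousLinearMap.smul_apply,
      ContinuousLinearMap.coe_id', id_eq, ContinuousLinearMap.coe_smul', Pi.smul_apply,
      smul_eq_mul, real_inner_smul_left, real_inner_comm x e, hxx, hee, hxv, hev]
    match_scalars <;> · field_simp; try ring
  have hTe : (Tder e x) e = (2*⟪e,x⟫^2/‖x‖^3 - 2/‖x‖) • x + (-(⟪e,x⟫/‖x‖)) • e := by
    simp only [Tder, ContinuousLinearMap.sub_apply, ContinuousLinearMap.add_apply,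
      ContinuousLinearMap.smulRight_apply, innerSL_apply_apply, ContinuousLinearMap.smul_apply,
      ContinuousLinearMap.coe_id', id_eq, ContinuousLinearMap.coe_smul', Pi.smul_apply,
      smul_eq_mul, real_inner_smul_left, real_inner_comm x e, hxx, hee, hxv, hev]
    match_scalars <;> · field_simp; try ring
  have hTv : (Tder e x) v = (-2*⟪e, x⟫/‖x‖) • v := by
    simp only [Tder, ContinuousLinearMap.sub_apply, ContinuousLinearMap.add_apply,
      ContinuousLinearMap.smulRight_apply, innerSL_apply_apply, ContinuousLinearMap.smul_apply,
      ContinuousLinearMap.coe_id', id_eq, ContinuousLinearMap.coe_smul', Pi.smul_apply,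
      smul_eq_mul, real_inner_smul_left, real_inner_comm x e, hxx, hee, hxv, hev]
    match_scalars <;> · field_simp; try ring
  have key : (Tder e x : V →ₗ[ℝ] V) = Matrix.toLin B B M := by
    apply B.ext
    intro j
    rw [Matrix.toLin_self]
    fin_cases j <;>
      simp only [hB, Fin.sum_univ_three, Fin.mk_zero, Fin.mk_one, Fin.reduceFinMk,
        Matrix.cons_val_zero, Matrix.cons_val_one, Matrix.head_cons, Matrix.cons_val_two,
        Matrix.tail_cons, Matrix.cons_val_succ, Fin.succ_zero_eq_one,
        Matrix.vecHead, Matrix.vecTail, ContinuousLinearMap.coe_coe, M,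
        Matrix.cons_val', Matrix.empty_val', Matrix.cons_val_fin_one, Matrix.of_apply,
        Fin.isValue, Function.comp_apply]
    · rw [hTx]; module
    · rw [hTe]; module
    · rw [hTv]; module
  have hdet : (Tder e x).det = M.det := by
    show LinearMap.det (Tder e x : V →ₗ[ℝ] V) = M.det
    rw [key, LinearMap.det_toLin]
  rw [hdet, Matrix.det_fin_three]
  simp only [M, Matrix.cons_val', Matrix.cons_val_zero, Matrix.empty_val',
    Matrix.cons_val_fin_one, Matrix.cons_val_one, Matrix.head_cons, Matrix.cons_val_two,
    Matrix.tail_cons, Matrix.head_fin_const, Matrix.of_apply]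
  field_simp
  ring

lemma inner_self_one {e : V} (he : ‖e‖ = 1) : ⟪e, e⟫ = 1 := by
  rw [real_inner_self_eq_norm_sq, he]; norm_num

lemma norm_Tmap {e : V} (he : ‖e‖ = 1) (x : V) : ‖Tmap e x‖ = ‖x‖ := by
  rcases eq_or_ne x 0 with rfl | hx
  · simp [Tmap]
  have hrne : (‖x‖:ℝ) ≠ 0 := norm_ne_zero_iff.2 hx
  have hxx : ⟪x, x⟫ = ‖x‖ ^ 2 := real_inner_self_eq_norm_sq x
  have h4 : ⟪Tmap e x, Tmap e x⟫ = ‖x‖ ^ 2 := by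
    simp only [Tmap, inner_sub_left, inner_sub_right, real_inner_smul_left,
      real_inner_smul_right, inner_self_one he, real_inner_comm x e, hxx]
    field_simp
    ring
  have h5 : ‖Tmap e x‖ ^ 2 = ‖x‖ ^ 2 := by
    rw [← real_inner_self_eq_norm_sq]; exact h4
  calc ‖Tmap e x‖ = Real.sqrt (‖Tmap e x‖ ^ 2) := (Real.sqrt_sq (norm_nonneg _)).symm
    _ = Real.sqrt (‖x‖ ^ 2) := by rw [h5]
    _ = ‖x‖ := Real.sqrt_sq (norm_nonneg _)

lemma inner_Tmap {e : V} (he : ‖e‖ = 1) (x : V) :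
    ⟪e, Tmap e x⟫ = ‖x‖ - 2 * ⟪e, x⟫ ^ 2 * ‖x‖⁻¹ := by
  simp only [Tmap, inner_sub_right, real_inner_smul_right, inner_self_one he]
  ring

def Sinv (e : V) (y : V) : V :=
  (‖y‖ / (2 * Real.sqrt (‖y‖ * (‖y‖ - ⟪e, y⟫) / 2))) • (‖y‖ • e - y)

lemma Sinv_Tmap {e : V} (he : ‖e‖ = 1) {x : V} (h1 : 0 < ⟪e, x⟫) (h2 : ⟪e, x⟫ < ‖x‖) :
    Sinv e (Tmap e x) = x := by
  have hx : x ≠ 0 := by rintro rfl; simp at h1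
  have hr : (0:ℝ) < ‖x‖ := norm_pos_iff.2 hx
  have hrne : (‖x‖:ℝ) ≠ 0 := ne_of_gt hr
  have hnT : ‖Tmap e x‖ = ‖x‖ := norm_Tmap he x
  have hiT : ⟪e, Tmap e x⟫ = ‖x‖ - 2 * ⟪e, x⟫ ^ 2 * ‖x‖⁻¹ := inner_Tmap he x
  have hsq : ‖Tmap e x‖ * (‖Tmap e x‖ - ⟪e, Tmap e x⟫) / 2 = ⟪e, x⟫ ^ 2 := by
    rw [hnT, hiT]; field_simp <;> ring
  have hsqrt : Real.sqrt (‖Tmap e x‖ * (‖Tmap e x‖ - ⟪e, Tmap e x⟫) / 2) = ⟪e, x⟫ := by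
    rw [hsq, Real.sqrt_sq h1.le]
  have hdiff : ‖Tmap e x‖ • e - Tmap e x = (2 * ⟪e, x⟫ * ‖x‖⁻¹) • x := by
    rw [hnT, Tmap, sub_sub_cancel]
  rw [Sinv, hsqrt, hdiff, hnT, smul_smul]
  have h2s : (2:ℝ) * ⟪e, x⟫ ≠ 0 := mul_ne_zero two_ne_zero (ne_of_gt h1)
  have : ‖x‖ / (2 * ⟪e, x⟫) * (2 * ⟪e, x⟫ * ‖x‖⁻¹) = 1 := by
    calc ‖x‖ / (2 * ⟪e, x⟫) * (2 * ⟪e, x⟫ * ‖x‖⁻¹)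
        = (2 * ⟪e, x⟫) / (2 * ⟪e, x⟫) * (‖x‖ * ‖x‖⁻¹) := by ring
      _ = 1 := by rw [div_self h2s, mul_inv_cancel₀ hrne, one_mul]
  rw [this, one_smul]

lemma Tmap_surj {e : V} (he : ‖e‖ = 1) {y : V} (hy : |⟪e, y⟫| < ‖y‖) :
    ∃ x : V, (0 < ⟪e, x⟫ ∧ ⟪e, x⟫ < ‖x‖) ∧ Tmap e x = y := by
  have hr : (0:ℝ) < ‖y‖ := lt_of_le_of_lt (abs_nonneg _) hy
  have hrne : (‖y‖:ℝ) ≠ 0 := ne_of_gt hr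
  have htlt : ⟪e, y⟫ < ‖y‖ := lt_of_le_of_lt (le_abs_self _) hy
  have htgt : -‖y‖ < ⟪e, y⟫ := neg_lt_of_abs_lt hy
  have hpos : (0:ℝ) < ‖y‖ * (‖y‖ - ⟪e, y⟫) / 2 := by nlinarith
  set s := Real.sqrt (‖y‖ * (‖y‖ - ⟪e, y⟫) / 2) with hs
  have hs2 : s ^ 2 = ‖y‖ * (‖y‖ - ⟪e, y⟫) / 2 := Real.sq_sqrt hpos.le
  have hspos : 0 < s := Real.sqrt_pos.2 hpos
  have hsne : s ≠ 0 := ne_of_gt hspos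
  set x : V := (‖y‖ / (2 * s)) • (‖y‖ • e - y) with hxdef
  have hyy : ⟪y, y⟫ = ‖y‖ ^ 2 := real_inner_self_eq_norm_sq y
  have hex : ⟪e, x⟫ = s := by
    rw [hxdef]
    rw [real_inner_smul_right, inner_sub_right, real_inner_smul_right, inner_self_one he]
    have ht : ‖y‖ * 1 - ⟪e, y⟫ = 2 * s ^ 2 / ‖y‖ := by
      rw [hs2]; field_simp
    rw [ht]; field_simp
  have hnx : ‖x‖ = ‖y‖ := by
    have hney : ‖‖y‖ • e - y‖ ^ 2 = (2 * s) ^ 2 := by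
      rw [← real_inner_self_eq_norm_sq]
      rw [inner_sub_left, inner_sub_right, inner_sub_right, real_inner_smul_left,
        real_inner_smul_left, real_inner_smul_right, real_inner_smul_right,
        inner_self_one he, hyy]
      rw [real_inner_comm e y]
      linear_combination (-4 : ℝ) * hs2
    have hney' : ‖‖y‖ • e - y‖ = 2 * s := by
      calc ‖‖y‖ • e - y‖ = Real.sqrt (‖‖y‖ • e - y‖ ^ 2) := (Real.sqrt_sq (norm_nonneg _)).symm
        _ = Real.sqrt ((2 * s) ^ 2) := by rw [hney]
        _ = 2 * s := Real.sqrt_sq (by positivity)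
    rw [hxdef, norm_smul, hney', Real.norm_eq_abs, abs_of_pos (by positivity)]
    field_simp
  refine ⟨x, ⟨by rw [hex]; exact hspos, by rw [hex, hnx]; nlinarith⟩, ?_⟩
  rw [Tmap, hex, hnx, hxdef, smul_smul]
  have hco : 2 * s * ‖y‖⁻¹ * (‖y‖ / (2 * s)) = 1 := by
    calc 2 * s * ‖y‖⁻¹ * (‖y‖ / (2 * s)) = (2*s)/(2*s) * (‖y‖ * ‖y‖⁻¹) := by ring
      _ = 1 := by rw [div_self (by positivity), mul_inv_cancel₀ hrne, one_mul]
  rw [hco, one_smul, sub_sub_cancel]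

instance : IsFiniteMeasure S2 :=
  inferInstanceAs (IsFiniteMeasure (volume : Measure V).toSphere)

lemma mem_span_of_cs {e y : V} (he : ‖e‖ = 1) (h : ‖y‖ ≤ |⟪e, y⟫|) :
    y ∈ Submodule.span ℝ ({e} : Set V) := by
  have hcs : |⟪e, y⟫| ≤ ‖e‖ * ‖y‖ := abs_real_inner_le_norm e y
  rw [he, one_mul] at hcs
  have heq : |⟪e, y⟫| = ‖y‖ := le_antisymm hcs h
  rcases abs_eq (norm_nonneg y) |>.1 heq with h1 | h1
  · have : ⟪e, y⟫ = ‖e‖ * ‖y‖ := by rw [he, one_mul]; exact h1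
    have h2 := inner_eq_norm_mul_iff_real.1 this
    rw [he, one_smul] at h2
    exact Submodule.mem_span_singleton.2 ⟨‖y‖, h2⟩
  · have : ⟪e, -y⟫ = ‖e‖ * ‖-y‖ := by
      rw [inner_neg_right, he, one_mul, norm_neg, h1]; ring
    have h2 := inner_eq_norm_mul_iff_real.1 this
    rw [he, one_smul, norm_neg] at h2
    refine Submodule.mem_span_singleton.2 ⟨-‖y‖, ?_⟩
    rw [neg_smul, h2, neg_neg]

lemma span_singleton_null {e : V} (he : ‖e‖ = 1) :
    volume ((Submodule.span ℝ ({e} : Set V) : Submodule ℝ V) : Set V) = 0 := by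
  apply Measure.addHaar_submodule
  intro htop
  have h1 : Module.finrank ℝ (Submodule.span ℝ ({e} : Set V)) = 1 :=
    finrank_span_singleton (by rintro rfl; simp at he)
  rw [htop] at h1
  rw [finrank_top] at h1
  rw [finrank_euclideanSpace_fin] at h1
  norm_num at h1

lemma integral_eq_Tmap {e : V} (he : ‖e‖ = 1) (g : V → ℝ) :
    ∫ y : V, g y
      = ∫ x in {x : V | 0 < ⟪e, x⟫ ∧ ⟪e, x⟫ < ‖x‖},
          4 * ((⟪e, x⟫ * ‖x‖⁻¹) * g (Tmap e x)) := by
  set U : Set V := {x : V | 0 < ⟪e, x⟫ ∧ ⟪e, x⟫ < ‖x‖} with hUdef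
  have hcont : Continuous fun x : V => ⟪e, x⟫ := continuous_const.inner continuous_id
  have hUopen : IsOpen U := by
    have h1 : IsOpen {x : V | 0 < ⟪e, x⟫} := isOpen_lt continuous_const hcont
    have h2 : IsOpen {x : V | ⟪e, x⟫ < ‖x‖} := isOpen_lt hcont continuous_norm
    exact (h1.inter h2)
  have hU : MeasurableSet U := hUopen.measurableSet
  have hne : ∀ x ∈ U, x ≠ 0 := by
    rintro x hx rfl; simpa using hx.1
  have hder : ∀ x ∈ U, HasFDerivWithinAt (Tmap e) (Tder e x) U x :=
    fun x hx => (hasFDerivAt_Tmap e (hne x hx)).hasFDerivWithinAt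
  have hinj : Set.InjOn (Tmap e) U := fun a ha b hb hab => by
    rw [← Sinv_Tmap he ha.1 ha.2, ← Sinv_Tmap he hb.1 hb.2, hab]
  have hcov := integral_image_eq_integral_abs_det_fderiv_smul volume hU hder hinj g
  have hcompl : (Tmap e '' U)ᶜ ⊆ ((Submodule.span ℝ ({e} : Set V) : Submodule ℝ V) : Set V) := by
    intro y hy
    by_contra hymem
    have hlt : |⟪e, y⟫| < ‖y‖ := by
      rcases lt_or_ge (|⟪e, y⟫|) ‖y‖ with h | h
      · exact h
      · exact absurd (mem_span_of_cs he h) hymem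
    obtain ⟨x, hxU, hxy⟩ := Tmap_surj he hlt
    exact hy ⟨x, hxU, hxy⟩
  have hnull : volume ((Tmap e '' U)ᶜ) = 0 :=
    measure_mono_null hcompl (span_singleton_null he)
  have hae : (Tmap e '' U : Set V) =ᵐ[volume] (univ : Set V) := by
    rw [ae_eq_univ]; exact hnull
  calc ∫ y : V, g y = ∫ y in univ, g y := by rw [setIntegral_univ]
    _ = ∫ y in Tmap e '' U, g y := (setIntegral_congr_set hae).symm
    _ = ∫ x in U, |(Tder e x).det| • g (Tmap e x) := hcov
    _ = ∫ x in U, 4 * ((⟪e, x⟫ * ‖x‖⁻¹) * g (Tmap e x)) := by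
        apply setIntegral_congr_fun hU
        intro x hx
        have hxne := hne x hx
        have hrpos : (0:ℝ) < ‖x‖ := norm_pos_iff.2 hxne
        dsimp only
        have h1 : (0:ℝ) < ⟪e, x⟫ := hx.1
        have h2 : (0:ℝ) < ‖x‖⁻¹ := inv_pos.2 hrpos
        rw [det_Tder he hx.1 hx.2, abs_neg,
          abs_of_pos (mul_pos (mul_pos (by norm_num : (0:ℝ) < 4) h1) h2), smul_eq_mul]
        ring

lemma integral_volumeIoiPow_exp :
    (∫ r : Ioi (0:ℝ), Real.exp (-(r:ℝ)^2) ∂(Measure.volumeIoiPow 2))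
      = ∫ r in Ioi (0:ℝ), r ^ 2 * Real.exp (-r ^ 2) := by
  simp only [Measure.volumeIoiPow, ENNReal.ofReal]
  rw [integral_withDensity_eq_integral_smul
      ((measurable_subtype_coe.pow_const _).real_toNNReal)]
  rw [integral_subtype_comap measurableSet_Ioi
      (fun a : ℝ => Real.toNNReal (a ^ 2) • Real.exp (-a^2))]
  apply setIntegral_congr_fun measurableSet_Ioi
  intro x hx
  dsimp only
  rw [NNReal.smul_def, Real.coe_toNNReal _ (pow_nonneg hx.out.le _), smul_eq_mul]

lemma integral_sphere_S2 (g : V → ℝ) :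
    ∫ x : V, g (‖x‖⁻¹ • x) * Real.exp (-‖x‖ ^ 2)
      = (∫ σ : sphere (0:V) 1, g (σ:V) ∂S2) * ∫ r in Ioi (0:ℝ), r ^ 2 * Real.exp (-r ^ 2) := by
  have h3 : Module.finrank ℝ V - 1 = 2 := by
    rw [finrank_euclideanSpace_fin]
  have hmp := (volume : Measure V).measurePreserving_homeomorphUnitSphereProd
  rw [h3] at hmp
  calc ∫ x : V, g (‖x‖⁻¹ • x) * Real.exp (-‖x‖^2)
      = ∫ x : ({(0:V)}ᶜ : Set V), g (‖x.1‖⁻¹ • x.1) * Real.exp (-‖x.1‖^2)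
          ∂((volume : Measure V).comap (↑)) := by
        rw [integral_subtype_comap (measurableSet_singleton _).compl
          (fun x : V => g (‖x‖⁻¹ • x) * Real.exp (-‖x‖^2)),
          restrict_compl_singleton]
    _ = ∫ p : sphere (0:V) 1 × Ioi (0:ℝ), g (p.1 : V) * Real.exp (-(p.2:ℝ)^2)
          ∂(S2.prod (Measure.volumeIoiPow 2)) := by
        rw [S2]
        rw [← hmp.integral_comp (Homeomorph.measurableEmbedding _)
          (fun p : sphere (0:V) 1 × Ioi (0:ℝ) => g (p.1 : V) * Real.exp (-(p.2:ℝ)^2))]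
        simp only [homeomorphUnitSphereProd_apply_fst_coe,
          homeomorphUnitSphereProd_apply_snd_coe]
    _ = (∫ σ : sphere (0:V) 1, g (σ:V) ∂S2)
          * ∫ r : Ioi (0:ℝ), Real.exp (-(r:ℝ)^2) ∂(Measure.volumeIoiPow 2) :=
        integral_prod_mul (fun σ : sphere (0:V) 1 => g (σ:V))
          (fun r : Ioi (0:ℝ) => Real.exp (-(r:ℝ)^2))
    _ = _ := by rw [integral_volumeIoiPow_exp]

lemma Jpos : 0 < ∫ r in Ioi (0:ℝ), r ^ 2 * Real.exp (-r ^ 2) := by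
  have hint : IntegrableOn (fun r : ℝ => r ^ 2 * Real.exp (-r ^ 2)) (Ioi 0) := by
    have h := (integrable_rpow_mul_exp_neg_mul_sq (by norm_num : (0:ℝ) < 1)
      (by norm_num : (-1:ℝ) < 2)).integrableOn (s := Ioi (0:ℝ))
    apply h.congr_fun ?_ measurableSet_Ioi
    intro x hx
    dsimp only
    rw [show ((2:ℝ)) = ((2:ℕ):ℝ) by norm_num, Real.rpow_natCast]
    norm_num
  rw [setIntegral_pos_iff_support_of_nonneg_ae ?_ hint]
  · have hsub : Ioc (0:ℝ) 1 ⊆ (Function.support fun r : ℝ => r ^ 2 * Real.exp (-r ^ 2)) ∩ Ioi 0 := by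
      intro r hr
      constructor
      · simp only [Function.mem_support]
        have h1 : 0 < r := hr.1
        positivity
      · exact hr.1
    calc (0:ℝ≥0∞) < volume (Ioc (0:ℝ) 1) := by
          rw [Real.volume_Ioc]; norm_num
      _ ≤ _ := measure_mono hsub
  · filter_upwards [ae_restrict_mem measurableSet_Ioi] with r hr
    have h1 : 0 < r := hr
    positivity

lemma Tmap_arg (q : V) (hq : q ≠ 0) {x : V} (hx : x ≠ 0) :
    (2:ℝ)⁻¹ • (q - ‖q‖ • (‖Tmap (‖q‖⁻¹ • q) x‖⁻¹ • Tmap (‖q‖⁻¹ • q) x))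
      = ⟪q, ‖x‖⁻¹ • x⟫ • (‖x‖⁻¹ • x) := by
  have he : ‖(‖q‖⁻¹ • q : V)‖ = 1 := norm_smul_inv_norm hq
  have hqne : ‖q‖ ≠ 0 := norm_ne_zero_iff.2 hq
  have hxne : ‖x‖ ≠ 0 := norm_ne_zero_iff.2 hx
  rw [norm_Tmap he x, Tmap]
  simp only [real_inner_smul_left, real_inner_smul_right]
  match_scalars <;> field_simp <;> ring

lemma restrict_lemma {e : V} (he : ‖e‖ = 1) (G E : V → ℝ) :
    ∫ x : V, (max ⟪e, ‖x‖⁻¹ • x⟫ 0 * G x) * E x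
      = ∫ x in {x : V | 0 < ⟪e, x⟫ ∧ ⟪e, x⟫ < ‖x‖}, (⟪e, x⟫ * ‖x‖⁻¹) * (G x * E x) := by
  set U : Set V := {x : V | 0 < ⟪e, x⟫ ∧ ⟪e, x⟫ < ‖x‖} with hUdef
  have hcont : Continuous fun x : V => ⟪e, x⟫ := continuous_const.inner continuous_id
  have hU : MeasurableSet U :=
    ((isOpen_lt continuous_const hcont).inter (isOpen_lt hcont continuous_norm)).measurableSet
  have hspan := span_singleton_null he
  have haemem : ∀ᵐ x : V, x ∉ ((Submodule.span ℝ ({e} : Set V) : Submodule ℝ V) : Set V) :=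
    (ae_iff.2 (by simpa using hspan))
  have hae : (fun x : V => (max ⟪e, ‖x‖⁻¹ • x⟫ 0 * G x) * E x)
      =ᵐ[volume] U.indicator (fun x : V => (max ⟪e, ‖x‖⁻¹ • x⟫ 0 * G x) * E x) := by
    filter_upwards [haemem] with x hxspan
    by_cases hxU : x ∈ U
    · rw [indicator_of_mem hxU]
    · rw [indicator_of_notMem hxU]
      have hlt : |⟪e, x⟫| < ‖x‖ := by
        rcases lt_or_ge (|⟪e, x⟫|) ‖x‖ with h | h
        · exact h
        · exact absurd (mem_span_of_cs he h) hxspan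
      have h2 : ⟪e, x⟫ < ‖x‖ := lt_of_le_of_lt (le_abs_self _) hlt
      have h1 : ⟪e, x⟫ ≤ 0 := by
        by_contra h
        push_neg at h
        exact hxU ⟨h, h2⟩
      have h3 : ⟪e, ‖x‖⁻¹ • x⟫ ≤ 0 := by
        rw [real_inner_smul_right]
        exact mul_nonpos_of_nonneg_of_nonpos (inv_nonneg.2 (norm_nonneg x)) h1
      rw [max_eq_right h3, zero_mul, zero_mul]
  rw [integral_congr_ae hae, integral_indicator hU]
  apply setIntegral_congr_fun hU
  intro x hx
  have h1 : (0:ℝ) < ⟪e, x⟫ := hx.1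
  have h4 : ⟪e, ‖x‖⁻¹ • x⟫ = ‖x‖⁻¹ * ⟪e, x⟫ := real_inner_smul_right e x _
  have h5 : (0:ℝ) ≤ ⟪e, ‖x‖⁻¹ • x⟫ := by
    rw [h4]; positivity
  dsimp only
  rw [max_eq_left h5, h4]
  ring


/-- **Bobylev-type change of variables on the sphere**:
∫_{S²} (q̂·n)₊ φ((q·n)n) dn = (1/4)∫_{S²} φ((q−|q|σ)/2) dσ. -/
theorem bobylev_change_of_variables (q : V) (hq : q ≠ 0)
    (φ : V → ℝ) (hφ : Continuous φ) :
    (∫ (n : sphere (0:V) 1),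
        max ⟪‖q‖⁻¹ • q, (n:V)⟫ 0 * φ (⟪q, (n:V)⟫ • (n:V)) ∂S2)
      = (1/4) * ∫ (σ : sphere (0:V) 1), φ ((2:ℝ)⁻¹ • (q - ‖q‖ • (σ:V))) ∂S2 := by
  have hq' : ‖q‖ ≠ 0 := norm_ne_zero_iff.2 hq
  have he : ‖(‖q‖⁻¹ • q : V)‖ = 1 := norm_smul_inv_norm hq
  have hJ : 0 < ∫ r in Ioi (0:ℝ), r ^ 2 * Real.exp (-r ^ 2) := Jpos
  set J : ℝ := ∫ r in Ioi (0:ℝ), r ^ 2 * Real.exp (-r ^ 2) with hJdef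
  set Ls : ℝ := ∫ (n : sphere (0:V) 1),
      max ⟪‖q‖⁻¹ • q, (n:V)⟫ 0 * φ (⟪q, (n:V)⟫ • (n:V)) ∂S2 with hLs
  set Rs : ℝ := ∫ (σ : sphere (0:V) 1), φ ((2:ℝ)⁻¹ • (q - ‖q‖ • (σ:V))) ∂S2 with hRs
  set RHS1 : ℝ := ∫ x in {x : V | 0 < ⟪(‖q‖⁻¹ • q : V), x⟫ ∧ ⟪(‖q‖⁻¹ • q : V), x⟫ < ‖x‖},
      (⟪(‖q‖⁻¹ • q : V), x⟫ * ‖x‖⁻¹)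
        * (φ (⟪q, ‖x‖⁻¹ • x⟫ • (‖x‖⁻¹ • x)) * Real.exp (-‖x‖ ^ 2)) with hRHS1
  have hcont : Continuous fun x : V => ⟪(‖q‖⁻¹ • q : V), x⟫ :=
    continuous_const.inner continuous_id
  have hU : MeasurableSet {x : V | 0 < ⟪(‖q‖⁻¹ • q : V), x⟫ ∧ ⟪(‖q‖⁻¹ • q : V), x⟫ < ‖x‖} :=
    ((isOpen_lt continuous_const hcont).inter (isOpen_lt hcont continuous_norm)).measurableSet
  have hA : Ls * J = RHS1 := by
    have h1 := integral_sphere_S2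
      (fun y : V => max ⟪(‖q‖⁻¹ • q : V), y⟫ 0 * φ (⟪q, y⟫ • y))
    have h2 := restrict_lemma he
      (fun x : V => φ (⟪q, ‖x‖⁻¹ • x⟫ • (‖x‖⁻¹ • x)))
      (fun x : V => Real.exp (-‖x‖ ^ 2))
    exact h1.symm.trans h2
  have hB : Rs * J = 4 * RHS1 := by
    have h3 := integral_sphere_S2 (fun y : V => φ ((2:ℝ)⁻¹ • (q - ‖q‖ • y)))
    have h4 := integral_eq_Tmap he
      (fun y : V => φ ((2:ℝ)⁻¹ • (q - ‖q‖ • (‖y‖⁻¹ • y))) * Real.exp (-‖y‖ ^ 2))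
    have h5 : (∫ x in {x : V | 0 < ⟪(‖q‖⁻¹ • q : V), x⟫ ∧ ⟪(‖q‖⁻¹ • q : V), x⟫ < ‖x‖},
        4 * ((⟪(‖q‖⁻¹ • q : V), x⟫ * ‖x‖⁻¹)
          * (φ ((2:ℝ)⁻¹ • (q - ‖q‖ • (‖Tmap (‖q‖⁻¹ • q) x‖⁻¹ • Tmap (‖q‖⁻¹ • q) x)))
              * Real.exp (-‖Tmap (‖q‖⁻¹ • q) x‖ ^ 2))))
        = ∫ x in {x : V | 0 < ⟪(‖q‖⁻¹ • q : V), x⟫ ∧ ⟪(‖q‖⁻¹ • q : V), x⟫ < ‖x‖},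
            4 * ((⟪(‖q‖⁻¹ • q : V), x⟫ * ‖x‖⁻¹)
              * (φ (⟪q, ‖x‖⁻¹ • x⟫ • (‖x‖⁻¹ • x)) * Real.exp (-‖x‖ ^ 2))) := by
      apply setIntegral_congr_fun hU
      intro x hx
      have hxne : x ≠ 0 := by rintro rfl; simpa using hx.1
      dsimp only
      rw [Tmap_arg q hq hxne, norm_Tmap he x]
    have h6 : (∫ x in {x : V | 0 < ⟪(‖q‖⁻¹ • q : V), x⟫ ∧ ⟪(‖q‖⁻¹ • q : V), x⟫ < ‖x‖},
        4 * ((⟪(‖q‖⁻¹ • q : V), x⟫ * ‖x‖⁻¹)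
          * (φ (⟪q, ‖x‖⁻¹ • x⟫ • (‖x‖⁻¹ • x)) * Real.exp (-‖x‖ ^ 2)))) = 4 * RHS1 := by
      rw [hRHS1, integral_const_mul]
    exact h3.symm.trans ((h4.trans h5).trans h6)
  have h7 : Ls * 4 * J = Rs * J := by
    have h8 : Ls * 4 * J = 4 * (Ls * J) := by ring
    rw [h8, hA]
    exact hB.symm
  have h9 : Ls * 4 = Rs := mul_right_cancel₀ (ne_of_gt hJ) h7
  linarith
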